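/- (Gauss-Kuzmin-type equation) Let μ be a non-atomic probability measure on the Borel subsets of [0,θ], and for n ≥ 0 define F_n(x) = μ({y ∈ [0,θ] : T_θⁿ(y) ≤ x}). Then for every x ∈ [0,θ] and every n ≥ 0, F_{n+1}(x) = Σ_{i≥m} ( F_n(1/(iθ)) − F_n(1/(iθ + x)) ). -/

import Mathlib

open MeasureTheory Real Set

/-- θ = 1/√m. -/
noncomputable def theta (m : ℕ) : ℝ := 1 / Real.sqrt m

/-- The θ-expansion transformation T_θ(x) = 1/x − θ·⌊1/(xθ)⌋ for x ≠ 0, T_θ(0) = 0. -/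
noncomputable def Tmap (m : ℕ) (x : ℝ) : ℝ :=
  if x = 0 then 0 else 1 / x - theta m * (⌊1 / (x * theta m)⌋ : ℝ)

/-- `digit m x n` is the digit a_{n+1}(x) = ⌊1/(θ·T_θⁿ(x))⌋. -/
noncomputable def digit (m : ℕ) (x : ℝ) (n : ℕ) : ℤ :=
  ⌊1 / (theta m * (Tmap m)^[n] x)⌋

lemma theta_pos {m : ℕ} (hm : 2 ≤ m) : 0 < theta m := by
  have hm' : (0:ℝ) < (m:ℝ) := by exact_mod_cast Nat.lt_of_lt_of_le two_pos hm
  have h : (0:ℝ) < Real.sqrt m := Real.sqrt_pos.2 hm'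
  unfold theta; positivity

lemma theta_sq {m : ℕ} (hm : 2 ≤ m) : (m : ℝ) * theta m * theta m = 1 := by
  have hm' : (0:ℝ) < (m:ℝ) := by exact_mod_cast Nat.lt_of_lt_of_le two_pos hm
  have h : Real.sqrt m * Real.sqrt m = (m:ℝ) := Real.mul_self_sqrt hm'.le
  have h0 : Real.sqrt m ≠ 0 := by
    intro h0; rw [h0, mul_zero] at h; linarith
  unfold theta
  field_simp
  rw [Real.sq_sqrt hm'.le]

lemma Tmap_mem {m : ℕ} (hm : 2 ≤ m) {z : ℝ} (hz : z ∈ Icc 0 (theta m)) :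
    Tmap m z ∈ Icc 0 (theta m) := by
  have hθ := theta_pos hm
  rcases eq_or_lt_of_le hz.1 with h0 | h0
  · rw [Tmap, if_pos h0.symm]; exact ⟨le_rfl, hθ.le⟩
  · have hz0 : z ≠ 0 := ne_of_gt h0
    have hu : (1 / (z * theta m)) * theta m = 1 / z := by field_simp
    have hfl : (⌊1 / (z * theta m)⌋ : ℝ) ≤ 1 / (z * theta m) := Int.floor_le _
    have hfl2 : 1 / (z * theta m) < (⌊1 / (z * theta m)⌋ : ℝ) + 1 := Int.lt_floor_add_one _
    rw [Tmap, if_neg hz0]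
    constructor
    · nlinarith
    · nlinarith

lemma Tmap_iterate_mem {m : ℕ} (hm : 2 ≤ m) {y : ℝ} (hy : y ∈ Icc 0 (theta m)) (n : ℕ) :
    (Tmap m)^[n] y ∈ Icc 0 (theta m) := by
  induction n with
  | zero => simpa
  | succ n ih => rw [Function.iterate_succ_apply']; exact Tmap_mem hm ih

lemma measurable_Tmap (m : ℕ) : Measurable (Tmap m) := by
  unfold Tmap
  have hset : MeasurableSet {x : ℝ | x = 0} := by
    have : {x : ℝ | x = 0} = {0} := by ext; simp
    rw [this]; exact MeasurableSet.singleton 0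
  refine Measurable.ite hset measurable_const ?_
  apply Measurable.sub
  · exact measurable_const.div measurable_id
  · apply measurable_const.mul
    have h1 : Measurable fun x : ℝ => 1 / (x * theta m) :=
      measurable_const.div (measurable_id.mul measurable_const)
    exact (measurable_from_top : Measurable fun z : ℤ => (z : ℝ)).comp (Int.measurable_floor.comp h1)


lemma countable_preimage_Tmap (m : ℕ) {C : Set ℝ} (hC : C.Countable) :
    (Tmap m ⁻¹' C).Countable := by
  have h1 : ∀ c : ℝ, (Tmap m ⁻¹' {c}).Countable := by
    intro c
    have hsub : Tmap m ⁻¹' {c} ⊆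
        insert 0 (Set.range fun i : ℤ => (c + theta m * i)⁻¹) := by
      intro z hz
      simp only [mem_preimage, mem_singleton_iff] at hz
      by_cases h0 : z = 0
      · exact Or.inl h0
      · refine Or.inr ⟨⌊1 / (z * theta m)⌋, ?_⟩
        rw [Tmap, if_neg h0] at hz
        have h : 1 / z = c + theta m * (⌊1 / (z * theta m)⌋ : ℝ) := by linarith
        show (c + theta m * (⌊1 / (z * theta m)⌋ : ℝ))⁻¹ = z
        rw [← h, one_div, inv_inv]
    exact Set.Countable.mono hsub ((Set.countable_range _).insert 0)
  have h2 : Tmap m ⁻¹' C = ⋃ c ∈ C, Tmap m ⁻¹' {c} := by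
    ext z; simp
  rw [h2]
  exact hC.biUnion fun c _ => h1 c

lemma countable_preimage_iterate (m : ℕ) (n : ℕ) {C : Set ℝ} (hC : C.Countable) :
    ((Tmap m)^[n] ⁻¹' C).Countable := by
  induction n with
  | zero => simpa
  | succ n ih =>
      rw [Function.iterate_succ, Set.preimage_comp]
      exact countable_preimage_Tmap m ih

lemma digit_ge {m : ℕ} (hm : 2 ≤ m) {z : ℝ} (hz0 : 0 < z) (hzθ : z ≤ theta m) :
    (m : ℤ) ≤ ⌊1 / (z * theta m)⌋ := by
  have hθ := theta_pos hm
  refine Int.le_floor.2 ?_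
  push_cast
  rw [le_div_iff₀ (by positivity)]
  have h1 : z * theta m ≤ theta m * theta m := mul_le_mul_of_nonneg_right hzθ hθ.le
  have h2 := theta_sq hm
  have hm' : (0:ℝ) ≤ (m:ℝ) := by positivity
  nlinarith

lemma mem_le_of_mem_Ioc {m : ℕ} (hm : 2 ≤ m) {x : ℝ} (hx0 : 0 ≤ x) (hxθ : x ≤ theta m)
    {z : ℝ} {i : ℕ}
    (hz : z ∈ Ioc (1 / (((i + m : ℕ) : ℝ) * theta m + x)) (1 / (((i + m : ℕ) : ℝ) * theta m))) :
    Tmap m z ≤ x := by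
  have hθ := theta_pos hm
  have hk2 : (2:ℝ) ≤ ((i + m : ℕ) : ℝ) := by
    have : 2 ≤ i + m := le_trans hm (Nat.le_add_left m i)
    exact_mod_cast this
  have hkθ : 0 < ((i + m : ℕ) : ℝ) * theta m := by nlinarith
  have hkθx : 0 < ((i + m : ℕ) : ℝ) * theta m + x := by linarith
  have hz0 : 0 < z := lt_trans (by positivity) hz.1
  have h1 : z * (((i + m : ℕ) : ℝ) * theta m) ≤ 1 := by
    have := hz.2; rwa [le_div_iff₀ hkθ] at this
  have h2 : 1 < z * (((i + m : ℕ) : ℝ) * theta m + x) := by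
    have := hz.1; rwa [div_lt_iff₀ hkθx] at this
  push_cast at h1 h2
  have hfloor : ⌊1 / (z * theta m)⌋ = ((i + m : ℕ) : ℤ) := by
    rw [Int.floor_eq_iff]
    constructor
    · push_cast
      rw [le_div_iff₀ (by positivity)]
      nlinarith
    · push_cast
      rw [div_lt_iff₀ (by positivity)]
      nlinarith [mul_le_mul_of_nonneg_left hxθ hz0.le]
  rw [Tmap, if_neg (ne_of_gt hz0), hfloor]
  push_cast
  rw [sub_le_iff_le_add, div_le_iff₀ hz0]
  nlinarith

lemma exists_Ioc_of_le {m : ℕ} (hm : 2 ≤ m) {x : ℝ} (hx0 : 0 ≤ x)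
    {z : ℝ} (hz0 : 0 < z) (hzθ : z ≤ theta m) (hT : Tmap m z ≤ x)
    (hne : ∀ i : ℕ, z ≠ 1 / (((i + m : ℕ) : ℝ) * theta m + x)) :
    ∃ i : ℕ, z ∈ Ioc (1 / (((i + m : ℕ) : ℝ) * theta m + x))
      (1 / (((i + m : ℕ) : ℝ) * theta m)) := by
  have hθ := theta_pos hm
  have hj := digit_ge hm hz0 hzθ
  refine ⟨(⌊1 / (z * theta m)⌋ - m).toNat, ?_⟩
  have hcast : ((((⌊1 / (z * theta m)⌋ - m).toNat + m : ℕ)) : ℝ) = ((⌊1 / (z * theta m)⌋ : ℤ) : ℝ) := by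
    have h := Int.toNat_of_nonneg (sub_nonneg.2 hj)
    have h2 : ((((⌊1 / (z * theta m)⌋ - m).toNat + m : ℕ)) : ℤ) = ⌊1 / (z * theta m)⌋ := by
      rw [Nat.cast_add, h]; ring
    exact_mod_cast h2
  rw [hcast]
  have hjpos : (0:ℝ) < ((⌊1 / (z * theta m)⌋ : ℤ) : ℝ) := by
    have : (2:ℝ) ≤ ((m:ℤ) : ℝ) := by exact_mod_cast hm
    have h2 : ((m:ℤ) : ℝ) ≤ ((⌊1 / (z * theta m)⌋ : ℤ) : ℝ) := by exact_mod_cast hj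
    linarith
  have hfl : ((⌊1 / (z * theta m)⌋ : ℤ) : ℝ) ≤ 1 / (z * theta m) := Int.floor_le _
  have hjθ : 0 < ((⌊1 / (z * theta m)⌋ : ℤ) : ℝ) * theta m := mul_pos hjpos hθ
  have hT' : 1 / z - theta m * ((⌊1 / (z * theta m)⌋ : ℤ) : ℝ) ≤ x := by
    rwa [Tmap, if_neg (ne_of_gt hz0)] at hT
  constructor
  · have h1 : 1 / z ≤ ((⌊1 / (z * theta m)⌋ : ℤ) : ℝ) * theta m + x := by linarith [mul_comm (theta m) ((⌊1 / (z * theta m)⌋ : ℤ) : ℝ)]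
    rw [div_le_iff₀ hz0] at h1
    have h2 : 1 / (((⌊1 / (z * theta m)⌋ : ℤ) : ℝ) * theta m + x) ≤ z := by
      rw [div_le_iff₀ (by linarith)]
      linarith
    refine lt_of_le_of_ne h2 ?_
    have := hne (⌊1 / (z * theta m)⌋ - m).toNat
    rw [hcast] at this
    exact fun h => this h.symm
  · rw [le_div_iff₀ hjθ]
    have := (le_div_iff₀ (by positivity : (0:ℝ) < z * theta m)).1 hfl
    nlinarith

lemma measure_slice (μ : Measure ℝ) [IsFiniteMeasure μ] {g : ℝ → ℝ} (hg : Measurable g)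
    {S : Set ℝ} (hS : MeasurableSet S) {c d : ℝ} (hcd : c ≤ d) :
    (μ (S ∩ g ⁻¹' Ioc c d)).toReal
      = (μ {y ∈ S | g y ≤ d}).toReal - (μ {y ∈ S | g y ≤ c}).toReal := by
  have hsp : {y ∈ S | g y ≤ d} = {y ∈ S | g y ≤ c} ∪ (S ∩ g ⁻¹' Ioc c d) := by
    ext y
    simp only [mem_setOf_eq, mem_union, mem_inter_iff, mem_preimage, mem_Ioc]
    constructor
    · rintro ⟨hyS, hyd⟩
      rcases le_or_gt (g y) c with h | h
      · exact Or.inl ⟨hyS, h⟩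
      · exact Or.inr ⟨hyS, h, hyd⟩
    · rintro (⟨hyS, h⟩ | ⟨hyS, h1, h2⟩)
      · exact ⟨hyS, h.trans hcd⟩
      · exact ⟨hyS, h2⟩
  have hdisj : Disjoint {y ∈ S | g y ≤ c} (S ∩ g ⁻¹' Ioc c d) := by
    rw [Set.disjoint_left]
    rintro y ⟨hyS, hy⟩ ⟨_, hy2, _⟩
    exact absurd hy (not_le.2 hy2)
  have hmeas : MeasurableSet (S ∩ g ⁻¹' Ioc c d) := hS.inter (hg measurableSet_Ioc)
  have h : μ {y ∈ S | g y ≤ d} = μ {y ∈ S | g y ≤ c} + μ (S ∩ g ⁻¹' Ioc c d) := by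
    rw [hsp, measure_union hdisj hmeas]
  rw [h, ENNReal.toReal_add (measure_ne_top μ _) (measure_ne_top μ _)]
  ring

/-- Gauss-Kuzmin-type equation: for a non-atomic probability measure μ on [0,θ],
with F_n(x) = μ(T_θⁿ ≤ x), one has
F_{n+1}(x) = Σ_{i≥m} ( F_n(1/(iθ)) − F_n(1/(iθ+x)) ). -/
theorem gauss_kuzmin_equation (m : ℕ) (hm : 2 ≤ m) (hns : ¬ IsSquare m)
    (μ : Measure ℝ) (hprob : IsProbabilityMeasure μ) (hna : NoAtoms μ)
    (hsupp : μ (Icc 0 (theta m))ᶜ = 0)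
    (F : ℕ → ℝ → ℝ)
    (hF : ∀ n : ℕ, ∀ x : ℝ,
      F n x = (μ {y ∈ Icc 0 (theta m) | (Tmap m)^[n] y ≤ x}).toReal) :
    ∀ x ∈ Icc 0 (theta m), ∀ n : ℕ,
      F (n + 1) x =
        ∑' i : ℕ,
          (F n (1 / (((i + m : ℕ) : ℝ) * theta m)) -
            F n (1 / (((i + m : ℕ) : ℝ) * theta m + x))) := by
  intro x hx n
  obtain ⟨hx0, hxθ⟩ := hx
  have hθ := theta_pos hm
  have hfmeas : Measurable ((Tmap m)^[n]) := (measurable_Tmap m).iterate n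
  have hk2 : ∀ i : ℕ, (2:ℝ) ≤ ((i + m : ℕ) : ℝ) := by
    intro i
    have : 2 ≤ i + m := le_trans hm (Nat.le_add_left m i)
    exact_mod_cast this
  have hkθ : ∀ i : ℕ, 0 < ((i + m : ℕ) : ℝ) * theta m := fun i => by nlinarith [hk2 i]
  have hkθx : ∀ i : ℕ, 0 < ((i + m : ℕ) : ℝ) * theta m + x := fun i => by linarith [hkθ i]
  have hab : ∀ i : ℕ, 1 / (((i + m : ℕ) : ℝ) * theta m + x) ≤ 1 / (((i + m : ℕ) : ℝ) * theta m) :=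
    fun i => one_div_le_one_div_of_le (hkθ i) (le_add_of_nonneg_right hx0)
  set A : ℕ → Set ℝ := fun i =>
    Icc 0 (theta m) ∩ (Tmap m)^[n] ⁻¹'
      Ioc (1 / (((i + m : ℕ) : ℝ) * theta m + x)) (1 / (((i + m : ℕ) : ℝ) * theta m))
    with hAdef
  have hAmeas : ∀ i, MeasurableSet (A i) :=
    fun i => measurableSet_Icc.inter (hfmeas measurableSet_Ioc)
  have hAdisj : Pairwise (Function.onFun Disjoint A) := by
    have key : ∀ i j : ℕ, i < j →
        1 / (((j + m : ℕ) : ℝ) * theta m) ≤ 1 / (((i + m : ℕ) : ℝ) * theta m + x) := by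
      intro i j hij
      apply one_div_le_one_div_of_le (hkθx i)
      have h1 : ((i + m : ℕ) : ℝ) + 1 ≤ ((j + m : ℕ) : ℝ) := by
        have : i + m + 1 ≤ j + m := by omega
        exact_mod_cast this
      nlinarith
    intro i j hij
    have hd : Disjoint
        (Ioc (1 / (((i + m : ℕ) : ℝ) * theta m + x)) (1 / (((i + m : ℕ) : ℝ) * theta m)))
        (Ioc (1 / (((j + m : ℕ) : ℝ) * theta m + x)) (1 / (((j + m : ℕ) : ℝ) * theta m))) := by
      rw [Set.Ioc_disjoint_Ioc]
      rcases hij.lt_or_gt with h | h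
      · exact le_trans (min_le_right _ _) (le_trans (key i j h) (le_max_left _ _))
      · exact le_trans (min_le_left _ _) (le_trans (key j i h) (le_max_right _ _))
    exact (hd.preimage _).mono inter_subset_right inter_subset_right
  have hmain : μ {y ∈ Icc 0 (theta m) | (Tmap m)^[n+1] y ≤ x} = μ (⋃ i, A i) := by
    have hCc : (insert (0:ℝ)
        (Set.range fun i : ℕ => 1 / (((i + m : ℕ) : ℝ) * theta m + x))).Countable :=
      (Set.countable_range _).insert 0
    have hN : μ ((Tmap m)^[n] ⁻¹' insert (0:ℝ)
        (Set.range fun i : ℕ => 1 / (((i + m : ℕ) : ℝ) * theta m + x))) = 0 :=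
      by haveI : NullSingletonClass μ := hna; exact (countable_preimage_iterate m n hCc).measure_zero μ
    apply le_antisymm
    · have hsub : {y ∈ Icc 0 (theta m) | (Tmap m)^[n+1] y ≤ x} ⊆
          (⋃ i, A i) ∪ (Tmap m)^[n] ⁻¹' insert (0:ℝ)
            (Set.range fun i : ℕ => 1 / (((i + m : ℕ) : ℝ) * theta m + x)) := by
        rintro y ⟨hyS, hyT⟩
        by_cases hC : (Tmap m)^[n] y ∈ insert (0:ℝ)
            (Set.range fun i : ℕ => 1 / (((i + m : ℕ) : ℝ) * theta m + x))
        · exact Or.inr hC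
        · left
          simp only [Set.mem_insert_iff, Set.mem_range, not_or, not_exists] at hC
          have hzmem := Tmap_iterate_mem hm ⟨hyS.1, hyS.2⟩ n
          have hz0 : 0 < (Tmap m)^[n] y := lt_of_le_of_ne hzmem.1 (Ne.symm hC.1)
          have hT : Tmap m ((Tmap m)^[n] y) ≤ x := by
            rwa [Function.iterate_succ_apply'] at hyT
          obtain ⟨i, hi⟩ := exists_Ioc_of_le hm hx0 hz0 hzmem.2 hT
            (fun i h => hC.2 i h.symm)
          exact Set.mem_iUnion.2 ⟨i, hyS, hi⟩
      calc μ {y ∈ Icc 0 (theta m) | (Tmap m)^[n+1] y ≤ x}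
          ≤ μ ((⋃ i, A i) ∪ _) := measure_mono hsub
        _ ≤ μ (⋃ i, A i) + _ := measure_union_le _ _
        _ = μ (⋃ i, A i) := by rw [hN, add_zero]
    · apply measure_mono
      rintro y hy
      obtain ⟨i, hyS, hyIoc⟩ := Set.mem_iUnion.1 hy
      refine ⟨hyS, ?_⟩
      rw [Function.iterate_succ_apply']
      exact mem_le_of_mem_Ioc hm hx0 hxθ hyIoc
  haveI := hprob
  rw [hF (n+1) x, hmain, measure_iUnion hAdisj hAmeas,
    ENNReal.tsum_toReal_eq (fun i => measure_ne_top μ _)]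
  refine tsum_congr fun i => ?_
  rw [hF n (1 / (((i + m : ℕ) : ℝ) * theta m)), hF n (1 / (((i + m : ℕ) : ℝ) * theta m + x))]
  exact measure_slice μ hfmeas measurableSet_Icc (hab i)
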